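/- Let p be a prime with p > d/2 and let f(z) = z^d + a_{d−1} z^{d−1} + ⋯ + a_1 z ∈ P_d be post-critically bounded. Let c₁ be a critical point of f of maximal absolute value among all critical points, and suppose |c₁| > 1. Then max_{1 ≤ i ≤ d−1} |a_i|^{1/(d−i)} = |c₁|. -/

import Mathlib

open Polynomial

section helpers

variable {K : Type*} [NormedField K]

lemma na_add_eq (hna : IsNonarchimedean (fun x : K => ‖x‖)) {x y : K} (h : ‖y‖ < ‖x‖) :
    ‖x + y‖ = ‖x‖ := by
  have h1 : ‖x + y‖ ≤ ‖x‖ := le_trans (hna x y) (max_le le_rfl h.le)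
  refine le_antisymm h1 ?_
  by_contra hlt
  push_neg at hlt
  have h2 : ‖x‖ ≤ max ‖x + y‖ ‖y‖ := by
    have := hna (x + y) (-y)
    simpa using this
  rcases max_cases ‖x + y‖ ‖y‖ with ⟨he, _⟩ | ⟨he, _⟩ <;> rw [he] at h2 <;> linarith

lemma na_sum_lt (hna : IsNonarchimedean (fun x : K => ‖x‖)) {ι : Type*} (g : ι → K) {M : ℝ}
    (hM : 0 < M) : ∀ s : Finset ι, (∀ i ∈ s, ‖g i‖ < M) → ‖∑ i ∈ s, g i‖ < M := by
  intro s
  induction s using Finset.cons_induction_on with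
  | empty => intro _; simpa using hM
  | cons _ _ ha ih =>
      intro h
      rw [Finset.sum_cons]
      exact lt_of_le_of_lt (hna _ _)
        (max_lt (h _ (Finset.mem_cons_self _ _)) (ih fun i hi => h i (Finset.mem_cons_of_mem hi)))

lemma na_msum_le (hna : IsNonarchimedean (fun x : K => ‖x‖)) {B : ℝ} (hB : 0 ≤ B) :
    ∀ t : Multiset K, (∀ x ∈ t, ‖x‖ ≤ B) → ‖t.sum‖ ≤ B := by
  intro t
  induction t using Multiset.induction_on with
  | empty => intro _; simpa using hB
  | cons a s ih =>
      intro h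
      rw [Multiset.sum_cons]
      exact le_trans (hna _ _)
        (max_le (h a (Multiset.mem_cons_self a s)) (ih fun x hx => h x (Multiset.mem_cons_of_mem hx)))

lemma norm_msprod {r : ℝ} (hr : 0 ≤ r) :
    ∀ t : Multiset K, (∀ x ∈ t, ‖x‖ ≤ r) → ‖t.prod‖ ≤ r ^ Multiset.card t := by
  intro t
  induction t using Multiset.induction_on with
  | empty => intro _; simp
  | cons a s ih =>
      intro h
      rw [Multiset.prod_cons, Multiset.card_cons, norm_mul, pow_succ']
      exact mul_le_mul (h a (Multiset.mem_cons_self a s))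
        (ih fun x hx => h x (Multiset.mem_cons_of_mem hx)) (norm_nonneg _) hr

lemma escape {d : ℕ} (hd : 2 ≤ d) (g : K → K) {t : ℝ} (ht : 1 < t)
    (hesc : ∀ z : K, t ≤ ‖z‖ → ‖g z‖ = ‖z‖ ^ d)
    {z₀ : K} (hz₀ : t ≤ ‖z₀‖) {B : ℝ} (hB : ∀ n, ‖g^[n] z₀‖ ≤ B) : False := by
  have ht0 : (0:ℝ) < t := lt_trans zero_lt_one ht
  have key : ∀ n, t ^ (n + 1) ≤ ‖g^[n] z₀‖ := by
    intro n
    induction n with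
    | zero => simpa using hz₀
    | succ n ih =>
        have h1 : t ≤ ‖g^[n] z₀‖ :=
          le_trans (le_self_pow₀ ht.le (Nat.succ_ne_zero n)) ih
        have hx1 : (1:ℝ) ≤ ‖g^[n] z₀‖ := le_trans ht.le h1
        rw [Function.iterate_succ_apply', hesc _ h1]
        have h2 : t ^ (n + 1 + 1) ≤ ‖g^[n] z₀‖ ^ 2 := by
          rw [pow_succ, sq]
          exact mul_le_mul ih (le_trans (le_self_pow₀ ht.le (Nat.succ_ne_zero n)) ih)
            ht0.le (norm_nonneg _)
        exact le_trans h2 (pow_le_pow_right₀ hx1 hd)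
  obtain ⟨n, hn⟩ := pow_unbounded_of_one_lt B ht
  have : t ^ n ≤ t ^ (n + 1) := pow_le_pow_right₀ ht.le (Nat.le_succ n)
  linarith [key n, hB n]

lemma eval_dom (hna : IsNonarchimedean (fun x : K => ‖x‖)) {f : K[X]} {d : ℕ}
    (hdeg : f.natDegree = d) (z : K) {j : ℕ} (hj : j ≤ d)
    (hpos : 0 < ‖f.coeff j * z ^ j‖)
    (h : ∀ i ≤ d, i ≠ j → ‖f.coeff i * z ^ i‖ < ‖f.coeff j * z ^ j‖) :
    ‖f.eval z‖ = ‖f.coeff j * z ^ j‖ := by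
  classical
  have hjmem : j ∈ Finset.range (d + 1) := Finset.mem_range.2 (Nat.lt_succ_of_le hj)
  rw [eval_eq_sum_range, hdeg, ← Finset.add_sum_erase _ _ hjmem]
  exact na_add_eq hna (na_sum_lt hna _ hpos _ fun i hi => by
    rcases Finset.mem_erase.1 hi with ⟨hne, hr⟩
    exact h i (Nat.lt_succ_iff.1 (Finset.mem_range.1 hr)) hne)

end helpers

/-- Let `p` be a prime with `p > d/2` and let
`f(z) = z^d + a_{d-1} z^{d-1} + ⋯ + a_1 z ∈ P_d` be post-critically bounded.
Let `c₁` be a critical point of maximal absolute value with `|c₁| > 1`. Then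
`max_{1 ≤ i ≤ d-1} |a_i|^(1/(d-i)) = |c₁|`. -/
theorem stmt_6 (K : Type*) [NormedField K] [IsAlgClosed K] [CompleteSpace K]
    (hna : IsNonarchimedean (fun x : K => ‖x‖))
    (p : ℕ) (hp : p.Prime)
    (hext : ∀ q : ℚ, ‖(q : K)‖ = (padicNorm p q : ℝ))
    (d : ℕ) (hdp : d < 2 * p)
    (f : K[X]) (hmonic : f.Monic) (hdeg : f.natDegree = d) (hf0 : f.eval 0 = 0)
    (hPCB : ∀ c : K, f.derivative.eval c = 0 →
      ∃ B : ℝ, ∀ n : ℕ, ‖(fun z => f.eval z)^[n] c‖ ≤ B)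
    (c₁ : K) (hc₁ : f.derivative.eval c₁ = 0)
    (hmax : ∀ c : K, f.derivative.eval c = 0 → ‖c‖ ≤ ‖c₁‖)
    (hbig : 1 < ‖c₁‖) :
    IsGreatest
      ((fun i : ℕ => ‖f.coeff i‖ ^ (1 / ((d : ℝ) - (i : ℝ)))) '' Set.Icc 1 (d - 1))
      ‖c₁‖ := by
  classical
  haveI : Fact p.Prime := ⟨hp⟩
  set r := ‖c₁‖ with hr
  have hr0 : (0:ℝ) < r := lt_trans zero_lt_one hbig
  have hr1 : (1:ℝ) ≤ r := hbig.le
  have hc0 : f.coeff 0 = 0 := by rw [Polynomial.coeff_zero_eq_eval_zero, hf0]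
  -- d ≥ 2
  have hd2 : 2 ≤ d := by
    by_contra hcon
    push_neg at hcon
    interval_cases d
    · have h1 := hmonic.coeff_natDegree
      rw [hdeg, hc0] at h1
      exact zero_ne_one h1
    · have hc1' : f.coeff 1 = 1 := by have := hmonic.coeff_natDegree; rwa [hdeg] at this
      have hnd : f.derivative.natDegree = 0 := by
        have := Polynomial.natDegree_derivative_le f
        omega
      have hder0 : f.derivative.coeff 0 = 1 := by
        rw [Polynomial.coeff_derivative, hc1']; simp
      rw [Polynomial.eq_C_of_natDegree_eq_zero hnd, hder0] at hc₁
      simp at hc₁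
  have hd0 : d ≠ 0 := by omega
  -- norms of naturals
  have hnat : ∀ n : ℕ, ‖(n : K)‖ = (padicNorm p n : ℝ) := by
    intro n
    have := hext (n : ℚ)
    rwa [Rat.cast_natCast] at this
  have hnat_le : ∀ n : ℕ, ‖(n : K)‖ ≤ 1 := by
    intro n; rw [hnat]; exact_mod_cast padicNorm.of_nat n
  have hnat_one : ∀ n : ℕ, ¬ p ∣ n → ‖(n : K)‖ = 1 := by
    intro n h; rw [hnat]; exact_mod_cast (padicNorm.nat_eq_one_iff n).2 h
  have hdK : ((d : K)) ≠ 0 := by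
    rw [← norm_ne_zero_iff, hnat]
    exact_mod_cast padicNorm.nonzero (by exact_mod_cast hd0)
  have hcd : f.coeff d = 1 := by have := hmonic.coeff_natDegree; rwa [hdeg] at this
  -- derivative facts
  have hdcoeff : f.derivative.coeff (d - 1) = (d : K) := by
    rw [Polynomial.coeff_derivative]
    have h1 : d - 1 + 1 = d := by omega
    rw [h1, hcd, one_mul]
    have : ((d - 1 : ℕ) : K) + 1 = ((d - 1 + 1 : ℕ) : K) := by push_cast; ring
    rw [this, h1]
  have hdnd : f.derivative.natDegree = d - 1 := by
    have hle := Polynomial.natDegree_derivative_le f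
    rw [hdeg] at hle
    have hge : d - 1 ≤ f.derivative.natDegree :=
      Polynomial.le_natDegree_of_ne_zero (hdcoeff ▸ hdK)
    omega
  have hlead : f.derivative.leadingCoeff = (d : K) := by
    rw [Polynomial.leadingCoeff, hdnd, hdcoeff]
  have hcard : Multiset.card f.derivative.roots = f.derivative.natDegree :=
    Polynomial.splits_iff_card_roots.1 (IsAlgClosed.splits f.derivative)
  have hroots_le : ∀ x ∈ f.derivative.roots, ‖x‖ ≤ r :=
    fun x hx => hmax x (Polynomial.isRoot_of_mem_roots hx)
  have hesymm : ∀ k, ‖f.derivative.roots.esymm k‖ ≤ r ^ k := by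
    intro k
    apply na_msum_le hna (pow_nonneg hr0.le k)
    intro x hx
    rcases Multiset.mem_map.1 hx with ⟨t, ht, rfl⟩
    rcases Multiset.mem_powersetCard.1 ht with ⟨hsub, hcardt⟩
    calc ‖t.prod‖ ≤ r ^ Multiset.card t :=
          norm_msprod hr0.le t (fun y hy => hroots_le y (Multiset.mem_of_le hsub hy))
      _ = r ^ k := by rw [hcardt]
  -- upper bound, good indices
  have hub_good : ∀ i, 1 ≤ i → i ≤ d - 1 → ¬ p ∣ i → ‖f.coeff i‖ ≤ r ^ (d - i) := by
    intro i h1 h2 hpi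
    have hk : i - 1 ≤ f.derivative.natDegree := by omega
    have hv := Polynomial.coeff_eq_esymm_roots_of_card hcard hk
    have hnd1 : f.derivative.natDegree - (i - 1) = d - i := by omega
    rw [hlead, hnd1] at hv
    have hdc : f.derivative.coeff (i - 1) = f.coeff i * (i : K) := by
      rw [Polynomial.coeff_derivative]
      have h3 : i - 1 + 1 = i := by omega
      rw [h3]
      congr 1
      have : ((i - 1 : ℕ) : K) + 1 = ((i - 1 + 1 : ℕ) : K) := by push_cast; ring
      rw [this, h3]
    rw [hdc] at hv
    have hnorm : ‖f.coeff i‖ * ‖(i : K)‖ ≤ r ^ (d - i) := by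
      rw [← norm_mul, hv, norm_mul, norm_mul, norm_pow, norm_neg, norm_one, one_pow, mul_one]
      calc ‖(d : K)‖ * ‖(derivative f).roots.esymm (d - i)‖ ≤ 1 * r ^ (d - i) :=
            mul_le_mul (hnat_le d) (hesymm _) (norm_nonneg _) zero_le_one
        _ = r ^ (d - i) := one_mul _
    rw [hnat_one i hpi, mul_one] at hnorm
    exact hnorm
  -- small index characterization
  have hp_only : ∀ j, 1 ≤ j → j ≤ d - 1 → p ∣ j → j = p := by
    intro j hj1 hj2 hpj
    obtain ⟨k, rfl⟩ := hpj
    have hk0 : k ≠ 0 := by rintro rfl; omega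
    have hk1 : k = 1 := by
      by_contra hk
      have h2k : 2 ≤ k := by omega
      have h5 : p * 2 ≤ p * k := Nat.mul_le_mul_left p h2k
      have h6 : p * 2 ≤ d - 1 := le_trans h5 hj2
      omega
    rw [hk1, mul_one]
  -- upper bound, all indices
  have hub : ∀ i, 1 ≤ i → i ≤ d - 1 → ‖f.coeff i‖ ≤ r ^ (d - i) := by
    intro i h1 h2
    by_cases hpi : p ∣ i
    · have hip : i = p := hp_only i h1 h2 hpi
      by_contra hcon
      push_neg at hcon
      set a := f.coeff i with ha
      have hothers : ∀ j, 1 ≤ j → j ≤ d - 1 → j ≠ i → ‖f.coeff j‖ ≤ r ^ (d - j) := by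
        intro j hj1 hj2 hji
        refine hub_good j hj1 hj2 fun hpj => hji ?_
        rw [hp_only j hj1 hj2 hpj, hip]
      have hM : r ^ d < ‖a * c₁ ^ i‖ := by
        rw [norm_mul, norm_pow, ← hr]
        have he : r ^ d = r ^ (d - i) * r ^ i := by rw [← pow_add]; congr 1; omega
        rw [he]
        exact mul_lt_mul_of_pos_right hcon (pow_pos hr0 i)
      have hMpos : 0 < ‖a * c₁ ^ i‖ := lt_trans (pow_pos hr0 d) hM
      have hdomc : ‖f.eval c₁‖ = ‖a * c₁ ^ i‖ := by
        apply eval_dom hna hdeg c₁ (show i ≤ d by omega) hMpos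
        intro j hj hji
        rcases Nat.eq_zero_or_pos j with rfl | hj0
        · rw [hc0]; simpa using hMpos
        by_cases hjd : j = d
        · subst hjd
          rw [hcd, one_mul, norm_pow, ← hr]
          exact hM
        · have hj2 : j ≤ d - 1 := by omega
          calc ‖f.coeff j * c₁ ^ j‖ = ‖f.coeff j‖ * r ^ j := by rw [norm_mul, norm_pow, hr]
            _ ≤ r ^ (d - j) * r ^ j := by
                exact mul_le_mul_of_nonneg_right (hothers j hj0 hj2 hji) (pow_nonneg hr0.le j)
            _ = r ^ d := by rw [← pow_add]; congr 1; omega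
            _ < _ := hM
      have ht1 : (1:ℝ) < ‖a * c₁ ^ i‖ :=
        lt_of_le_of_lt (show (1:ℝ) ≤ r ^ d by simpa using pow_le_pow_right₀ hr1 (Nat.zero_le d)) hM
      obtain ⟨B, hB⟩ := hPCB c₁ hc₁
      refine escape hd2 (fun z => f.eval z) ht1 ?_ (le_of_eq hdomc.symm) (B := B) (fun n => ?_)
      · intro z hz
        have hz1 : (1:ℝ) < ‖z‖ := lt_of_lt_of_le ht1 hz
        have hz0 : (0:ℝ) < ‖z‖ := lt_trans zero_lt_one hz1
        have hzr : r < ‖z‖ :=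
          lt_of_le_of_lt (by simpa using pow_le_pow_right₀ hr1 (show 1 ≤ d by omega))
            (lt_of_lt_of_le hM hz)
        have hzd : ‖f.eval z‖ = ‖f.coeff d * z ^ d‖ := by
          apply eval_dom hna hdeg z le_rfl
          · rw [hcd, one_mul, norm_pow]; positivity
          intro j hj hjd
          rw [hcd, one_mul, norm_pow]
          rcases Nat.eq_zero_or_pos j with rfl | hj0
          · rw [hc0]; simpa using pow_pos hz0 d
          have hj2 : j ≤ d - 1 := by omega
          rw [norm_mul, norm_pow]
          by_cases hji : j = i
          · subst hji
            have h3 : ‖a‖ < ‖a * c₁ ^ j‖ := by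
              rw [norm_mul, norm_pow, ← hr]
              have hia : (0:ℝ) < ‖a‖ :=
                lt_of_lt_of_le (pow_pos hr0 (d - j)) hcon.le
              nlinarith [lt_of_lt_of_le hbig (show r ≤ r ^ j by simpa using pow_le_pow_right₀ hr1 (show 1 ≤ j by omega))]
            have h4 : ‖a * c₁ ^ j‖ ≤ ‖z‖ ^ (d - j) :=
              le_trans hz (by simpa using pow_le_pow_right₀ hz1.le (show 1 ≤ d - j by omega))
            calc ‖a‖ * ‖z‖ ^ j < ‖z‖ ^ (d - j) * ‖z‖ ^ j :=
                  mul_lt_mul_of_pos_right (lt_of_lt_of_le h3 h4) (pow_pos hz0 j)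
              _ = ‖z‖ ^ d := by rw [← pow_add]; congr 1; omega
          · have hcj : ‖f.coeff j‖ ≤ r ^ (d - j) := hothers j hj0 hj2 hji
            have hlt : r ^ (d - j) < ‖z‖ ^ (d - j) :=
              pow_lt_pow_left₀ hzr hr0.le (show d - j ≠ 0 by omega)
            calc ‖f.coeff j‖ * ‖z‖ ^ j ≤ r ^ (d - j) * ‖z‖ ^ j :=
                  mul_le_mul_of_nonneg_right hcj (pow_nonneg hz0.le j)
              _ < ‖z‖ ^ (d - j) * ‖z‖ ^ j := mul_lt_mul_of_pos_right hlt (pow_pos hz0 j)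
              _ = ‖z‖ ^ d := by rw [← pow_add]; congr 1; omega
        rw [hzd, hcd, one_mul, norm_pow]
      · have := hB (n + 1)
        rwa [Function.iterate_succ_apply] at this
    · exact hub_good i h1 h2 hpi
  -- membership
  have hmem : ∃ i, 1 ≤ i ∧ i ≤ d - 1 ∧ ‖f.coeff i‖ = r ^ (d - i) := by
    by_contra hcon
    push_neg at hcon
    have hlt : ∀ i, 1 ≤ i → i ≤ d - 1 → ‖f.coeff i‖ < r ^ (d - i) :=
      fun i h1 h2 => lt_of_le_of_ne (hub i h1 h2) (hcon i h1 h2)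
    obtain ⟨B, hB⟩ := hPCB c₁ hc₁
    refine escape hd2 (fun z => f.eval z) hbig ?_ (le_of_eq hr) hB
    intro z hz
    have hz0 : (0:ℝ) < ‖z‖ := lt_of_lt_of_le hr0 hz
    have hzd : ‖f.eval z‖ = ‖f.coeff d * z ^ d‖ := by
      apply eval_dom hna hdeg z le_rfl
      · rw [hcd, one_mul, norm_pow]; positivity
      intro j hj hjd
      rw [hcd, one_mul, norm_pow]
      rcases Nat.eq_zero_or_pos j with rfl | hj0
      · rw [hc0]; simpa using pow_pos hz0 d
      have hj2 : j ≤ d - 1 := by omega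
      rw [norm_mul, norm_pow]
      have hlt2 : ‖f.coeff j‖ < ‖z‖ ^ (d - j) :=
        lt_of_lt_of_le (hlt j hj0 hj2) (pow_le_pow_left₀ hr0.le hz (d - j))
      calc ‖f.coeff j‖ * ‖z‖ ^ j < ‖z‖ ^ (d - j) * ‖z‖ ^ j :=
            mul_lt_mul_of_pos_right hlt2 (pow_pos hz0 j)
        _ = ‖z‖ ^ d := by rw [← pow_add]; congr 1; omega
    rw [hzd, hcd, one_mul, norm_pow]
  -- assemble
  obtain ⟨i₀, hi1, hi2, hieq⟩ := hmem
  have hpow_eq : ∀ i, 1 ≤ i → i ≤ d - 1 → (r ^ (d - i)) ^ (1 / ((d:ℝ) - (i:ℝ))) = r := by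
    intro i h1 h2
    have hcast : ((d - i : ℕ) : ℝ) = (d : ℝ) - (i : ℝ) := by
      rw [Nat.cast_sub (by omega)]
    have hne : (d : ℝ) - (i : ℝ) ≠ 0 := by
      rw [← hcast]
      exact_mod_cast (show (d - i : ℕ) ≠ 0 by omega)
    rw [← Real.rpow_natCast r (d - i), hcast, ← Real.rpow_mul hr0.le, mul_one_div,
      div_self hne, Real.rpow_one]
  constructor
  · exact ⟨i₀, Set.mem_Icc.2 ⟨hi1, hi2⟩, by
      simp only []
      rw [hieq, hpow_eq i₀ hi1 hi2]⟩
  · rintro x ⟨i, hi, rfl⟩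
    obtain ⟨h1, h2⟩ := Set.mem_Icc.1 hi
    have hkey := hub i h1 h2
    have he0 : (0:ℝ) ≤ 1 / ((d:ℝ) - (i:ℝ)) := by
      have : (0:ℝ) < (d : ℝ) - (i : ℝ) := by
        have : ((d - i : ℕ) : ℝ) = (d : ℝ) - (i : ℝ) := by rw [Nat.cast_sub (by omega)]
        rw [← this]
        exact_mod_cast (show 0 < d - i by omega)
      positivity
    calc ‖f.coeff i‖ ^ (1 / ((d:ℝ) - (i:ℝ)))
        ≤ (r ^ (d - i)) ^ (1 / ((d:ℝ) - (i:ℝ))) :=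
          Real.rpow_le_rpow (norm_nonneg _) hkey he0
      _ = r := hpow_eq i h1 h2
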